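/- Let ν^m_i = #{j : λ^m_i − λ^m_j ∈ Λ^m} where λ^m is the enumeration of Λ^m. For m ≥ 2 and i ≤ c_m − g_m one has ν^m_i = ν^{m−1}_i. -/
import Mathlib

open scoped Classical


/-- The Garcia–Stichtenoth tower of Weierstrass semigroups:
`Λ¹ = ℕ₀`, `Λᵐ = q·Λ^{m-1} ∪ {i : i ≥ qᵐ - q^⌊(m+1)/2⌋}` for `m ≥ 2`. -/
def GSsemigroup (q : ℕ) : ℕ → Set ℕ
  | 0 => Set.univ
  | 1 => Set.univ
  | (m + 2) => (fun x => q * x) '' GSsemigroup q (m + 1) ∪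
      {i : ℕ | q ^ (m + 2) - q ^ ((m + 3) / 2) ≤ i}

/-- `c_m = q^m - q^⌊(m+1)/2⌋`, the conductor of `Λ^m`. -/
def gsC (q m : ℕ) : ℕ := q ^ m - q ^ ((m + 1) / 2)

/-- `g_m = (q^⌊(m+1)/2⌋ - 1)(q^⌈(m-1)/2⌉ - 1)`, the genus of `Λ^m`
(note `⌈(m-1)/2⌉ = ⌊m/2⌋` for `m ≥ 1`). -/
def gsG (q m : ℕ) : ℕ := (q ^ ((m + 1) / 2) - 1) * (q ^ (m / 2) - 1)

/-- `A_i = {j : q^{2i-1} - q^i ≤ j ≤ q^{2i-1} - q^{i-1} - 1}`. -/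
def gsA (q i : ℕ) : Set ℕ :=
  {j : ℕ | q ^ (2 * i - 1) - q ^ i ≤ j ∧ j ≤ q ^ (2 * i - 1) - q ^ (i - 1) - 1}

/-- The enumeration `λ` of `Λ^m`: the increasing bijection `ℕ₀ → Λ^m`. -/
noncomputable def gsEnum (q m : ℕ) : ℕ → ℕ := Nat.nth (fun n => n ∈ GSsemigroup q m)

/-- `ν_i = #{j : λ_i - λ_j ∈ Λ^m}` (the subtraction being in `ℤ`,
i.e. `∃ a ∈ Λ^m, λ_j + a = λ_i`). -/
noncomputable def gsNu (q m i : ℕ) : ℕ :=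
  Set.ncard {j : ℕ | ∃ a ∈ GSsemigroup q m, gsEnum q m j + a = gsEnum q m i}

/-- The order (Feng–Rao) bound `δ_i = min {ν_j : j > i}`. -/
noncomputable def gsDelta (q m i : ℕ) : ℕ := sInf (gsNu q m '' {j : ℕ | i < j})

/-- The semigroup floor `⌊k⌋_{Λ^m}`: the largest element of `Λ^m` not exceeding `k`. -/
noncomputable def gsFloor (q m k : ℕ) : ℕ := sSup {x ∈ GSsemigroup q m | x ≤ k}

/-- `λ⁻¹(x)` for `x ∈ Λ^m`: the number of elements of `Λ^m` below `x`. -/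
noncomputable def gsLinv (q m x : ℕ) : ℕ := Set.ncard {y ∈ GSsemigroup q m | y < x}

lemma gs_eq (q m : ℕ) (hm : 2 ≤ m) :
    GSsemigroup q m = (fun x => q * x) '' GSsemigroup q (m - 1) ∪ {i : ℕ | gsC q m ≤ i} := by
  obtain ⟨k, rfl⟩ : ∃ k, m = k + 2 := ⟨m - 2, by omega⟩
  rfl

lemma gs_mem_of_ge (q m x : ℕ) (h : gsC q m ≤ x) : x ∈ GSsemigroup q m := by
  match m with
  | 0 => trivial
  | 1 => trivial
  | (k + 2) => exact Or.inr h

lemma gs_infinite (q m : ℕ) : {n | n ∈ GSsemigroup q m}.Infinite := by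
  apply Set.Infinite.mono (s := Set.Ici (gsC q m))
  · exact fun x hx => gs_mem_of_ge q m x hx
  · exact Set.Ici_infinite _

lemma gs_enum_mem (q m i : ℕ) : gsEnum q m i ∈ GSsemigroup q m :=
  Nat.nth_mem_of_infinite (gs_infinite q m) i

lemma gs_enum_le_iff (q m : ℕ) {i j : ℕ} : gsEnum q m i ≤ gsEnum q m j ↔ i ≤ j := by
  exact (Nat.nth_strictMono (gs_infinite q m)).le_iff_le

lemma gs_enum_one (q i : ℕ) : gsEnum q 1 i = i := by
  have h : Nat.count (fun n => n ∈ GSsemigroup q 1) i = i := by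
    rw [Nat.count_eq_card_filter_range]
    have : ∀ n : ℕ, n ∈ GSsemigroup q 1 := fun n => trivial
    simp [this]
  have := Nat.nth_count (p := fun n => n ∈ GSsemigroup q 1) (n := i) trivial
  rwa [h] at this

/-- linear growth above a point where everything is in the set -/
lemma gs_count_add (p : ℕ → Prop) (c k : ℕ) (h : ∀ x, c ≤ x → p x) :
    Nat.count p (c + k) = Nat.count p c + k := by
  induction k with
  | zero => rfl
  | succ n ih => rw [← Nat.add_assoc, Nat.count_succ, ih, if_pos (h _ (by omega))]; omega

lemma gs_enum_add (q m i0 c k : ℕ) (h0 : gsEnum q m i0 = c)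
    (h : ∀ x, c ≤ x → x ∈ GSsemigroup q m) : gsEnum q m (i0 + k) = c + k := by
  have hc : Nat.count (fun n => n ∈ GSsemigroup q m) (c + k) = i0 + k := by
    rw [gs_count_add _ c k h]
    congr 1
    rw [← h0]
    exact Nat.count_nth_of_infinite (gs_infinite q m) i0
  have := Nat.nth_count (p := fun n => n ∈ GSsemigroup q m) (n := c + k) (h _ (by omega))
  rw [hc] at this
  exact this

/-- membership below the conductor forces divisibility -/
lemma gs_mem_le_c (q m x : ℕ) (hq : 2 ≤ q) (hm : 2 ≤ m) (hx : x ∈ GSsemigroup q m)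
    (hle : x ≤ gsC q m) : ∃ b ∈ GSsemigroup q (m - 1), x = q * b := by
  rw [gs_eq q m hm] at hx
  rcases hx with ⟨b, hb, rfl⟩ | hx
  · exact ⟨b, hb, rfl⟩
  · -- x = c_m
    have hxc : x = gsC q m := le_antisymm hle hx
    refine ⟨q ^ (m - 1) - q ^ ((m - 1) / 2), ?_, ?_⟩
    · apply gs_mem_of_ge
      unfold gsC
      have : q ^ ((m - 1) / 2) ≤ q ^ (m / 2) := Nat.pow_le_pow_right (by omega) (by omega)
      have h2 : (m - 1 + 1) / 2 = m / 2 := by omega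
      rw [h2]
      omega
    · rw [hxc]
      unfold gsC
      rw [Nat.mul_sub]
      have h1 : q * q ^ (m - 1) = q ^ m := by
        rw [← pow_succ']
        congr 1
        omega
      have h2 : q * q ^ ((m - 1) / 2) = q ^ ((m + 1) / 2) := by
        rw [← pow_succ']
        congr 1
        omega
      rw [h1, h2]


lemma gs_cg (q m : ℕ) (hq : 2 ≤ q) (hm : 1 ≤ m) : gsC q m - gsG q m = q ^ (m / 2) - 1 := by
  unfold gsC gsG
  have hst : (m + 1) / 2 + m / 2 = m := by omega
  have hpow : q ^ m = q ^ ((m + 1) / 2) * q ^ (m / 2) := by rw [← pow_add, hst]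
  obtain ⟨a, ha⟩ : ∃ a, q ^ ((m + 1) / 2) = a + 1 :=
    ⟨q ^ ((m + 1) / 2) - 1, by have := Nat.one_le_pow ((m+1)/2) q (by omega); omega⟩
  obtain ⟨b, hb⟩ : ∃ b, q ^ (m / 2) = b + 1 :=
    ⟨q ^ (m / 2) - 1, by have := Nat.one_le_pow (m/2) q (by omega); omega⟩
  rw [hpow, ha, hb]
  simp only [Nat.add_sub_cancel]
  have hexp : (a + 1) * (b + 1) = a * b + a + b + 1 := by ring
  omega

lemma gs_step (q : ℕ) (hq : 2 ≤ q) (m : ℕ) (hm : 2 ≤ m)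
    (ih1 : gsEnum q (m - 1) (q ^ ((m - 1) / 2) - 1) = gsC q (m - 1)) :
    (∀ i ≤ q ^ (m / 2) - 1, gsEnum q m i = q * gsEnum q (m - 1) i) ∧
      gsEnum q m (q ^ (m / 2) - 1) = gsC q m := by
  set t := m / 2 with ht
  set t' := (m - 1) / 2 with ht'
  set d := q ^ (m - 1) - q ^ t' with hd
  have hqt : 1 ≤ q ^ t' := Nat.one_le_pow _ _ (by omega)
  have htt : q ^ t' ≤ q ^ t := Nat.pow_le_pow_right (by omega) (by omega)
  have htm : q ^ t ≤ q ^ (m - 1) := Nat.pow_le_pow_right (by omega) (by omega)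
  have hcm1 : gsC q (m - 1) = q ^ (m - 1) - q ^ t := by
    unfold gsC; congr 2; omega
  have hd1 : gsEnum q (m - 1) (q ^ t - 1) = d := by
    have := gs_enum_add q (m - 1) (q ^ t' - 1) (gsC q (m - 1)) (q ^ t - q ^ t')
      ih1 (gs_mem_of_ge q (m - 1))
    rw [hcm1] at this
    have hidx : q ^ t' - 1 + (q ^ t - q ^ t') = q ^ t - 1 := by omega
    rw [hidx] at this
    rw [this]
    omega
  have hqd : q * d = gsC q m := by
    rw [hd]
    unfold gsC
    rw [Nat.mul_sub]
    have h1 : q * q ^ (m - 1) = q ^ m := by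
      rw [← pow_succ']
      congr 1
      omega
    have h2 : q * q ^ t' = q ^ ((m + 1) / 2) := by
      rw [← pow_succ']
      congr 1
      omega
    rw [h1, h2]
  have key2 : ∀ i ≤ q ^ t - 1, gsEnum q m i = q * gsEnum q (m - 1) i := by
    intro i hile
    set lam := gsEnum q (m - 1) i with hlam
    have hlamd : lam ≤ d := by
      rw [← hd1]
      exact (gs_enum_le_iff q (m - 1)).2 hile
    have hmemq : q * lam ∈ GSsemigroup q m := by
      rw [gs_eq q m hm]
      exact Or.inl ⟨lam, gs_enum_mem q (m - 1) i, rfl⟩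
    have hcount : Nat.count (fun n => n ∈ GSsemigroup q m) (q * lam) = i := by
      rw [Nat.count_eq_card_filter_range]
      have hset : ({x ∈ Finset.range (q * lam) | x ∈ GSsemigroup q m} : Finset ℕ)
          = ({x ∈ Finset.range lam | x ∈ GSsemigroup q (m - 1)} : Finset ℕ).image (q * ·) := by
        ext y
        simp only [Finset.mem_filter, Finset.mem_range, Finset.mem_image]
        constructor
        · rintro ⟨hy1, hy2⟩
          have hyc : y ≤ gsC q m := by
            calc y ≤ q * lam := le_of_lt hy1
            _ ≤ q * d := Nat.mul_le_mul_left q hlamd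
            _ = gsC q m := hqd
          obtain ⟨b, hb, rfl⟩ := gs_mem_le_c q m y hq hm hy2 hyc
          exact ⟨b, ⟨Nat.lt_of_mul_lt_mul_left hy1, hb⟩, rfl⟩
        · rintro ⟨b, ⟨hb1, hb2⟩, rfl⟩
          refine ⟨(mul_lt_mul_iff_right₀ (by omega : 0 < q)).2 hb1, ?_⟩
          rw [gs_eq q m hm]
          exact Or.inl ⟨b, hb2, rfl⟩
      rw [hset, Finset.card_image_of_injective _ (mul_right_injective₀ (a := q) (by omega))]
      rw [← Nat.count_eq_card_filter_range]
      exact Nat.count_nth_of_infinite (gs_infinite q (m - 1)) i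
    have := Nat.nth_count (p := fun n => n ∈ GSsemigroup q m) hmemq
    rw [hcount] at this
    exact this
  refine ⟨key2, ?_⟩
  rw [key2 (q ^ t - 1) le_rfl, hd1, hqd]

lemma gs_key (q : ℕ) (hq : 2 ≤ q) (m : ℕ) (hm : 1 ≤ m) :
    gsEnum q m (q ^ (m / 2) - 1) = gsC q m := by
  induction m with
  | zero => omega
  | succ n ih =>
    rcases Nat.lt_or_ge n 1 with hn | hn
    · interval_cases n
      simp [gs_enum_one, gsC]
    · have h := gs_step q hq (n + 1) (by omega) (by simpa using ih hn)
      exact h.2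


/-- for `m ≥ 2` and `i ≤ c_m - g_m`, `ν^m_i = ν^{m-1}_i`. -/
theorem stmt14 (q : ℕ) (hq : 2 ≤ q) (m : ℕ) (hm : 2 ≤ m) (i : ℕ)
    (hi : i ≤ gsC q m - gsG q m) :
    gsNu q m i = gsNu q (m - 1) i := by
  have hcg := gs_cg q m hq (by omega)
  have hi' : i ≤ q ^ (m / 2) - 1 := by omega
  obtain ⟨hall, htop⟩ := gs_step q hq m hm (gs_key q hq (m - 1) (by omega))
  have hq0 : 0 < q := by omega
  have hic : gsEnum q m i ≤ gsC q m := by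
    rw [← htop]
    exact (gs_enum_le_iff q m).2 hi'
  unfold gsNu
  congr 1
  ext j
  simp only [Set.mem_setOf_eq]
  constructor
  · rintro ⟨a, ha, hja⟩
    have hmi : gsEnum q m i = q * gsEnum q (m - 1) i := hall i hi'
    have hji : j ≤ i := (gs_enum_le_iff q m).1 (by omega)
    have hmj : gsEnum q m j = q * gsEnum q (m - 1) j := hall j (hji.trans hi')
    have hac : a ≤ gsC q m := by omega
    obtain ⟨b, hb, rfl⟩ := gs_mem_le_c q m a hq hm ha hac
    refine ⟨b, hb, ?_⟩
    have hmul : q * (gsEnum q (m - 1) j + b) = q * gsEnum q (m - 1) i := by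
      rw [Nat.mul_add, ← hmj, ← hmi]
      exact hja
    exact Nat.eq_of_mul_eq_mul_left hq0 hmul
  · rintro ⟨b, hb, hjb⟩
    have hji : j ≤ i := (gs_enum_le_iff q (m - 1)).1 (by omega)
    have hmi : gsEnum q m i = q * gsEnum q (m - 1) i := hall i hi'
    have hmj : gsEnum q m j = q * gsEnum q (m - 1) j := hall j (hji.trans hi')
    refine ⟨q * b, ?_, ?_⟩
    · rw [gs_eq q m hm]
      exact Or.inl ⟨b, hb, rfl⟩
    · rw [hmi, hmj, ← Nat.mul_add, hjb]
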